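/- Let ε ≥ 0.01, let 0 < δ ≤ 0.05, let Δ > 0, and let a be a real number satisfying erfc(a) − e^ε · erfc(√(a² + ε)) = 2δ. Then (a + √(a² + ε)) · Δ / (ε·√2) > Δ / √(2ε). (In particular a > 0, so the optimal Gaussian noise amount σ_DP-OPT = (a + √(a² + ε))·Δ/(ε√2) for (ε,δ)-differential privacy exceeds Δ/√(2ε).) -/

import Mathlib

open Real MeasureTheory Filter Topology Set

/-- The Gauss error function `erf x = (2/√π) ∫₀ˣ e^{−t²} dt`. -/
noncomputable def erf (x : ℝ) : ℝ := 2 / Real.sqrt Real.pi * ∫ t in (0:ℝ)..x, Real.exp (-t ^ 2)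

/-- The complementary error function `erfc x = 1 - erf x`. -/
noncomputable def erfc (x : ℝ) : ℝ := 1 - erf x


lemma gauss_cont : Continuous fun t : ℝ => Real.exp (-t ^ 2) := by continuity

lemma erf_hasDerivAt (x : ℝ) :
    HasDerivAt erf (2 / Real.sqrt Real.pi * Real.exp (-x ^ 2)) x := by
  have h := (gauss_cont.integral_hasStrictDerivAt 0 x).hasDerivAt
  exact (h.const_mul (2 / Real.sqrt Real.pi))

lemma erf_tendsto : Tendsto erf atTop (𝓝 1) := by
  have h1 : Tendsto (fun u : ℝ => ∫ t in (0:ℝ)..u, Real.exp (-t ^ 2)) atTop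
      (𝓝 (Real.sqrt Real.pi / 2)) := by
    have hint : IntegrableOn (fun t : ℝ => Real.exp (-t ^ 2)) (Ioi 0) := by
      have := (integrable_exp_neg_mul_sq (one_pos)).integrableOn (s := Ioi (0:ℝ))
      simpa using this
    have := MeasureTheory.intervalIntegral_tendsto_integral_Ioi 0 hint tendsto_id
    have hval : ∫ t in Ioi (0:ℝ), Real.exp (-t ^ 2) = Real.sqrt Real.pi / 2 := by
      have := integral_gaussian_Ioi 1
      simpa using this
    rwa [hval] at this
  have hπ : Real.sqrt Real.pi ≠ 0 := by positivity
  have := h1.const_mul (2 / Real.sqrt Real.pi)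
  have heq : 2 / Real.sqrt Real.pi * (Real.sqrt Real.pi / 2) = 1 := by
    field_simp
  show Tendsto (fun x => erf x) atTop (𝓝 1)
  simpa [erf, heq] using this

lemma sqrt_pi_lt : Real.sqrt Real.pi < 1.7725 := by
  rw [show (1.7725:ℝ) = Real.sqrt (1.7725^2) by rw [Real.sqrt_sq]; norm_num]
  apply Real.sqrt_lt_sqrt Real.pi_pos.le
  nlinarith [Real.pi_lt_d6]

lemma sqrt_pi_gt : (1.77:ℝ) < Real.sqrt Real.pi := by
  rw [show (1.77:ℝ) = Real.sqrt (1.77^2) by rw [Real.sqrt_sq]; norm_num]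
  apply Real.sqrt_lt_sqrt (by norm_num)
  nlinarith [Real.pi_gt_d6]

noncomputable def F (x : ℝ) : ℝ := erf x - 1 + 0.9 * Real.exp (-x ^ 2)

lemma F_hasDerivAt (x : ℝ) :
    HasDerivAt F ((2 / Real.sqrt Real.pi - 1.8 * x) * Real.exp (-x ^ 2)) x := by
  have h1 := erf_hasDerivAt x
  have h2 : HasDerivAt (fun x : ℝ => -x ^ 2) (-(2 * x)) x := by
    simpa using ((hasDerivAt_pow 2 x).fun_neg)
  have h3 := (h2.exp).const_mul (0.9 : ℝ)
  have := (h1.sub_const 1).add h3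
  exact this.congr_deriv (by ring)

lemma F_pos_at : 0 < F 0.1 := by
  have hlow : (0.1:ℝ) * Real.exp (-(0.1:ℝ)^2) ≤ ∫ t in (0:ℝ)..0.1, Real.exp (-t ^ 2) := by
    have h := intervalIntegral.integral_mono_on (a := (0:ℝ)) (b := 0.1) (by norm_num)
      (intervalIntegrable_const (μ := volume) (c := Real.exp (-(0.1:ℝ)^2)))
      (gauss_cont.intervalIntegrable 0 0.1)
      (fun t ht => by
        apply Real.exp_le_exp.2
        simp only [neg_le_neg_iff]
        nlinarith [ht.1, ht.2])
    simpa using h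
  have hexp : (0.99:ℝ) ≤ Real.exp (-(0.1:ℝ)^2) := by
    have := Real.add_one_le_exp (-(0.1:ℝ)^2)
    nlinarith
  have hπ1 : (0:ℝ) < Real.sqrt Real.pi := Real.sqrt_pos.2 Real.pi_pos
  have hπ2 := sqrt_pi_lt
  have hexp1 : Real.exp (-(0.1:ℝ)^2) ≤ 1 := Real.exp_le_one_iff.2 (by norm_num)
  have herf : 2 / Real.sqrt Real.pi * ((0.1:ℝ) * Real.exp (-(0.1:ℝ)^2)) ≤ erf 0.1 := by
    unfold erf
    apply mul_le_mul_of_nonneg_left hlow (by positivity)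
  have hdiv : (2:ℝ) / 1.7725 ≤ 2 / Real.sqrt Real.pi :=
    div_le_div_of_nonneg_left (by norm_num) hπ1 hπ2.le
  unfold F
  nlinarith [Real.exp_pos (-(0.1:ℝ)^2)]

lemma F_tendsto : Tendsto F atTop (𝓝 0) := by
  have h1 : Tendsto (fun x : ℝ => Real.exp (-x ^ 2)) atTop (𝓝 0) := by
    apply Real.tendsto_exp_atBot.comp
    apply tendsto_neg_atBot_iff.2
    exact tendsto_pow_atTop (by norm_num)
  have := ((erf_tendsto.sub_const 1).add (h1.const_mul (0.9:ℝ)))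
  show Tendsto (fun x => F x) atTop (𝓝 0)
  simpa [F] using this

lemma F_cont : Continuous F :=
  continuous_iff_continuousAt.2 fun x => (F_hasDerivAt x).continuousAt

lemma F_pos {u : ℝ} (hu : (0.1:ℝ) ≤ u) : 0 < F u := by
  set c : ℝ := 2 / (1.8 * Real.sqrt Real.pi) with hc
  have hπ1 : (0:ℝ) < Real.sqrt Real.pi := Real.sqrt_pos.2 Real.pi_pos
  have hπ2 := sqrt_pi_lt
  have hπ3 := sqrt_pi_gt
  have hc1 : (0.1:ℝ) < c := by
    rw [hc, lt_div_iff₀ (by positivity)]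
    nlinarith
  have hderiv : ∀ x : ℝ, deriv F x = (2 / Real.sqrt Real.pi - 1.8 * x) * Real.exp (-x ^ 2) :=
    fun x => (F_hasDerivAt x).deriv
  have hdiff : ∀ x : ℝ, DifferentiableAt ℝ F x := fun x => (F_hasDerivAt x).differentiableAt
  -- F is antitone on [c, ∞)
  have hanti : StrictAntiOn F (Ici c) := by
    apply strictAntiOn_of_deriv_neg (convex_Ici c) (F_cont.continuousOn)
    intro x hx
    rw [interior_Ici] at hx
    rw [hderiv]
    apply mul_neg_of_neg_of_pos _ (Real.exp_pos _)
    have : 2 / Real.sqrt Real.pi < 1.8 * x := by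
      rw [div_lt_iff₀ hπ1]
      have : c < x := hx
      rw [hc, div_lt_iff₀ (by positivity)] at this
      nlinarith
    linarith
  -- F ≥ 0 on [c, ∞) from the limit
  have hge : ∀ v : ℝ, c ≤ v → 0 ≤ F v := by
    intro v hv
    apply le_of_tendsto F_tendsto
    filter_upwards [eventually_ge_atTop (v + 1)] with w hw
    have h1 : F w ≤ F (v+1) := by
      rcases eq_or_lt_of_le hw with h | h
      · rw [h]
      · exact (hanti (by simp only [mem_Ici]; linarith) (by simp only [mem_Ici]; linarith) h).le
    have h2 : F (v+1) < F v := hanti (by simpa using hv) (by simp only [mem_Ici]; linarith) (by linarith)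
    linarith
  rcases le_or_gt u c with h | h
  · -- monotone part
    have hmono : MonotoneOn F (Icc (0.1:ℝ) c) := by
      apply monotoneOn_of_deriv_nonneg (convex_Icc _ _) (F_cont.continuousOn)
        (fun x _ => (hdiff x).differentiableWithinAt)
      intro x hx
      rw [interior_Icc] at hx
      rw [hderiv]
      apply mul_nonneg _ (Real.exp_pos _).le
      have : 1.8 * x ≤ 2 / Real.sqrt Real.pi := by
        have hxc : x < c := hx.2
        rw [hc, lt_div_iff₀ (by positivity)] at hxc
        rw [le_div_iff₀ hπ1]
        nlinarith
      linarith
    have := hmono (left_mem_Icc.2 (by linarith)) ⟨hu, h⟩ hu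
    linarith [F_pos_at]
  · have h1 : F u > F (u+1) := hanti (by simp only [mem_Ici]; linarith) (by simp only [mem_Ici]; linarith) (by linarith)
    have h2 := hge (u+1) (by linarith)
    linarith

lemma erfc_lt {u : ℝ} (hu : (0.1:ℝ) ≤ u) : erfc u < 0.9 * Real.exp (-u ^ 2) := by
  have := F_pos hu
  unfold F at this
  unfold erfc
  linarith

lemma erf_nonpos {x : ℝ} (hx : x ≤ 0) : erf x ≤ 0 := by
  unfold erf
  have h : (∫ t in (0:ℝ)..x, Real.exp (-t ^ 2)) ≤ 0 := by
    rw [intervalIntegral.integral_symm]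
    simp only [neg_nonpos]
    exact intervalIntegral.integral_nonneg hx (fun t _ => (Real.exp_pos _).le)
  have h2 : (0:ℝ) ≤ 2 / Real.sqrt Real.pi := by positivity
  exact mul_nonpos_of_nonneg_of_nonpos h2 h

/-- If `ε ≥ 0.01`, `0 < δ ≤ 0.05`, `Δ > 0`, and `a` satisfies
`erfc a − e^ε · erfc (√(a² + ε)) = 2δ`, then
`(a + √(a² + ε)) · Δ / (ε·√2) > Δ / √(2ε)`. -/
theorem sigma_DP_OPT_gt (ε δ Δ a : ℝ)
    (hε : 0.01 ≤ ε) (hδ0 : 0 < δ) (hδ1 : δ ≤ 0.05) (hΔ : 0 < Δ)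
    (ha : erfc a - Real.exp ε * erfc (Real.sqrt (a ^ 2 + ε)) = 2 * δ) :
    (a + Real.sqrt (a ^ 2 + ε)) * Δ / (ε * Real.sqrt 2) > Δ / Real.sqrt (2 * ε) := by
  have hε0 : (0:ℝ) < ε := lt_of_lt_of_le (by norm_num) hε
  set u := Real.sqrt (a ^ 2 + ε) with hu
  have husq : u ^ 2 = a ^ 2 + ε := Real.sq_sqrt (by positivity)
  have hu01 : (0.1:ℝ) ≤ u := by
    rw [hu, show (0.1:ℝ) = Real.sqrt 0.01 by
      rw [show (0.01:ℝ) = 0.1^2 by norm_num, Real.sqrt_sq]; norm_num]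
    exact Real.sqrt_le_sqrt (by nlinarith)
  -- show a > 0
  have hapos : 0 < a := by
    by_contra hna
    push_neg at hna
    have h1 : (1:ℝ) ≤ erfc a := by
      unfold erfc; linarith [erf_nonpos hna]
    have h2 : erfc u < 0.9 * Real.exp (-u ^ 2) := erfc_lt hu01
    have h3 : Real.exp ε * erfc u < Real.exp ε * (0.9 * Real.exp (-u ^ 2)) :=
      mul_lt_mul_of_pos_left h2 (Real.exp_pos ε)
    have h4 : Real.exp ε * Real.exp (-u ^ 2) = Real.exp (-a ^ 2) := by
      rw [← Real.exp_add, husq]; congr 1; ring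
    have h5 : Real.exp (-a ^ 2) ≤ 1 := Real.exp_le_one_iff.2 (neg_nonpos.2 (sq_nonneg a))
    nlinarith
  -- algebra
  have hs : (0:ℝ) < Real.sqrt ε := Real.sqrt_pos.2 hε0
  have hsq : Real.sqrt ε * Real.sqrt ε = ε := Real.mul_self_sqrt hε0.le
  have hge : Real.sqrt ε ≤ u := by
    rw [hu]; exact Real.sqrt_le_sqrt (by nlinarith)
  have h2 : (0:ℝ) < Real.sqrt 2 := by positivity
  rw [Real.sqrt_mul (by norm_num) ε, gt_iff_lt, div_lt_div_iff₀ (by positivity) (by positivity)]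
  have key : Real.sqrt ε < a + u := by linarith
  have hpos : 0 < Δ * (Real.sqrt 2 * Real.sqrt ε) := by positivity
  have hkey := mul_lt_mul_of_pos_left key hpos
  nlinarith [hkey, hsq]
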